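/- Let K be a nonempty compact Hausdorff topological space. Then Odd has a winning strategy in the game BM(K, ⋆) if and only if K contains a dense G_δ subspace that is metrizable. -/

import Mathlib

/-! The classical Banach–Mazur game on a topological space. -/

section BMtop

variable {X : Type*} [TopologicalSpace X]

/-- A play of the Banach–Mazur game: a decreasing sequence of nonempty open sets. -/
def TopPlay (U : ℕ → Set X) : Prop :=
  (∀ n, IsOpen (U n)) ∧ (∀ n, (U n).Nonempty) ∧ ∀ n, U (n + 1) ⊆ U n

/-- A finite decreasing sequence of nonempty open sets (a partial play). -/
def TopPartialPlay {m : ℕ} (v : Fin m → Set X) : Prop :=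
  (∀ i, IsOpen (v i)) ∧ (∀ i, (v i).Nonempty) ∧ ∀ i j : Fin m, i ≤ j → v j ⊆ v i

/-- A strategy for Odd: a value for every finite sequence of odd length. -/
def TopOddStrategy (X : Type*) := (k : ℕ) → (Fin (2 * k + 1) → Set X) → Set X

/-- A strategy for Odd is valid if it assigns, to every finite decreasing
sequence of nonempty open sets of odd length, a nonempty open subset of its
last term. -/
def TopOddValid (s : TopOddStrategy X) : Prop :=
  ∀ (k : ℕ) (v : Fin (2 * k + 1) → Set X), TopPartialPlay v →
    IsOpen (s k v) ∧ (s k v).Nonempty ∧ s k v ⊆ v (Fin.last (2 * k))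

/-- A play follows Odd's strategy `s` if every odd-indexed term is the value of
`s` on the preceding terms. -/
def TopOddFollows (U : ℕ → Set X) (s : TopOddStrategy X) : Prop :=
  ∀ k : ℕ, U (2 * k + 1) = s k (fun i => U i.val)

/-- Odd has a winning strategy in the classical Banach–Mazur game `BM(X)`
(he wins iff the intersection of the play is nonempty). -/
def TopOddWins (X : Type*) [TopologicalSpace X] : Prop :=
  ∃ s : TopOddStrategy X, TopOddValid s ∧
    ∀ U : ℕ → Set X, TopPlay U → TopOddFollows U s → (⋂ n, U n).Nonempty

/-- A strategy for Eve: a value for the empty sequence and for every finite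
sequence of even positive length. -/
def TopEveStrategy (X : Type*) := (k : ℕ) → (Fin (2 * k) → Set X) → Set X

/-- A strategy for Eve is valid if it assigns, to every finite decreasing
sequence of nonempty open sets of even length, a nonempty open set contained in
all of its terms (for the empty sequence: just a nonempty open set). -/
def TopEveValid (e : TopEveStrategy X) : Prop :=
  ∀ (k : ℕ) (v : Fin (2 * k) → Set X), TopPartialPlay v →
    IsOpen (e k v) ∧ (e k v).Nonempty ∧ ∀ i : Fin (2 * k), e k v ⊆ v i

/-- A play follows Eve's strategy `e` if every even-indexed term is the value of
`e` on the preceding terms. -/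
def TopEveFollows (U : ℕ → Set X) (e : TopEveStrategy X) : Prop :=
  ∀ k : ℕ, U (2 * k) = e k (fun i => U i.val)

/-- Eve has a winning strategy in the classical Banach–Mazur game `BM(X)`
(she wins iff the intersection of the play is empty). -/
def TopEveWins (X : Type*) [TopologicalSpace X] : Prop :=
  ∃ e : TopEveStrategy X, TopEveValid e ∧
    ∀ U : ℕ → Set X, TopPlay U → TopEveFollows U e → ¬ (⋂ n, U n).Nonempty

/-- Odd has a winning strategy in the game `BM(X, ⋆)` (he wins iff the
intersection of the play is a one-point set). -/
def TopOddWinsStar (X : Type*) [TopologicalSpace X] : Prop :=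
  ∃ s : TopOddStrategy X, TopOddValid s ∧
    ∀ U : ℕ → Set X, TopPlay U → TopOddFollows U s → ∃ x : X, (⋂ n, U n) = {x}

/-- Eve has a winning strategy in the game `BM(X, ⋆)` (she wins iff the
intersection of the play is not a one-point set). -/
def TopEveWinsStar (X : Type*) [TopologicalSpace X] : Prop :=
  ∃ e : TopEveStrategy X, TopEveValid e ∧
    ∀ U : ℕ → Set X, TopPlay U → TopEveFollows U e → ¬ ∃ x : X, (⋂ n, U n) = {x}

/-- A topological space is completely metrizable if its topology is induced by a
complete metric. -/
def IsCompletelyMetrizable (Y : Type*) [t : TopologicalSpace Y] : Prop :=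
  ∃ m : MetricSpace Y, m.toUniformSpace.toTopologicalSpace = t ∧
    @CompleteSpace Y m.toUniformSpace

end BMtop

namespace BM9

open Set

variable {K : Type*} [TopologicalSpace K] [CompactSpace K] [T2Space K]

lemma shrink {O : Set K} (hO : IsOpen O) {x : K} (hx : x ∈ O) :
    ∃ V : Set K, IsOpen V ∧ x ∈ V ∧ closure V ⊆ O := by
  obtain ⟨V, h1, h2, h3, -⟩ := exists_open_between_and_isCompact_closure isCompact_singleton hO
    (Set.singleton_subset_iff.2 hx)
  exact ⟨V, h1, Set.singleton_subset_iff.1 h2, h3⟩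

def Good (s : TopOddStrategy K) (n : ℕ) (p : ℕ → Set K) : Prop :=
  (∀ m, IsOpen (p m)) ∧ (∀ m, (p m).Nonempty) ∧ (∀ m, p (m+1) ⊆ p m) ∧
  (∀ k, k ≤ n → p (2*k+1) = s k (fun i => p i.val)) ∧
  (∀ k, k < n → closure (p (2*k+2)) ⊆ p (2*k+1)) ∧
  (∀ m, 2*n+1 ≤ m → p m = p (2*n+1))

lemma seq_anti {p : ℕ → Set K} (h : ∀ m, p (m+1) ⊆ p m) {a b : ℕ} (hab : a ≤ b) :
    p b ⊆ p a :=
  antitone_nat_of_succ_le h hab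

lemma Good.partialPlay {s : TopOddStrategy K} {n : ℕ} {p : ℕ → Set K} (hp : Good s n p)
    (m : ℕ) : TopPartialPlay (fun i : Fin m => p i.val) :=
  ⟨fun i => hp.1 _, fun i => hp.2.1 _, fun i j hij => seq_anti hp.2.2.1 hij⟩

lemma exists_child {s : TopOddStrategy K} (hs : TopOddValid s) {n : ℕ} {q : ℕ → Set K}
    (hq : Good s n q) {O : Set K} (hO : IsOpen O) (hne : O.Nonempty)
    (hsub : O ⊆ q (2*n+1)) :
    ∃ p : ℕ → Set K, Good s (n+1) p ∧ (∀ i, i ≤ 2*n+1 → p i = q i) ∧ p (2*n+3) ⊆ O := by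
  obtain ⟨x, hx⟩ := hne
  obtain ⟨W, hWo, hxW, hWcl⟩ := shrink hO hx
  have hWO : W ⊆ O := subset_closure.trans hWcl
  set p' : ℕ → Set K := fun i => if i ≤ 2*n+1 then q i else W with hp'def
  have hp'q : ∀ i, i ≤ 2*n+1 → p' i = q i := fun i hi => if_pos hi
  have hp'W : ∀ i, ¬ (i ≤ 2*n+1) → p' i = W := fun i hi => if_neg hi
  have hp'anti : ∀ m, p' (m+1) ⊆ p' m := by
    intro m
    by_cases h1 : m+1 ≤ 2*n+1
    · rw [hp'q _ h1, hp'q _ (by omega)]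
      exact hq.2.2.1 m
    · by_cases h2 : m ≤ 2*n+1
      · have hm : m = 2*n+1 := by omega
        subst hm
        rw [hp'W _ (by omega), hp'q _ le_rfl]
        exact hWO.trans hsub
      · rw [hp'W _ h1, hp'W _ h2]
  have hp'open : ∀ m, IsOpen (p' m) := by
    intro m; by_cases h : m ≤ 2*n+1
    · rw [hp'q _ h]; exact hq.1 m
    · rw [hp'W _ h]; exact hWo
  have hp'ne : ∀ m, (p' m).Nonempty := by
    intro m; by_cases h : m ≤ 2*n+1
    · rw [hp'q _ h]; exact hq.2.1 m
    · rw [hp'W _ h]; exact ⟨x, hxW⟩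
  set V := s (n+1) (fun i : Fin (2*(n+1)+1) => p' i.val) with hVdef
  have hVspec := hs (n+1) _ ⟨fun i => hp'open _, fun i => hp'ne _,
    fun i j hij => seq_anti hp'anti hij⟩
  simp only [Fin.val_last] at hVspec
  rw [hp'W (2*(n+1)) (by omega)] at hVspec
  obtain ⟨hVo, hVne, hVsub⟩ := hVspec
  have hVW : V ⊆ W := hVsub
  set p : ℕ → Set K := fun i => if i ≤ 2*n+2 then p' i else V with hpdef
  have hpp' : ∀ i, i ≤ 2*n+2 → p i = p' i := fun i hi => if_pos hi
  have hpV : ∀ i, ¬ (i ≤ 2*n+2) → p i = V := fun i hi => if_neg hi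
  have hpq : ∀ i, i ≤ 2*n+1 → p i = q i := fun i hi => by
    rw [hpp' _ (by omega), hp'q _ hi]
  have hpanti : ∀ m, p (m+1) ⊆ p m := by
    intro m
    by_cases h1 : m+1 ≤ 2*n+2
    · rw [hpp' _ h1, hpp' _ (by omega)]
      exact hp'anti m
    · by_cases h2 : m ≤ 2*n+2
      · have hm : m = 2*n+2 := by omega
        subst hm
        rw [hpV _ (by omega), hpp' _ le_rfl, hp'W _ (by omega)]
        exact hVW
      · rw [hpV _ h1, hpV _ h2]
  refine ⟨p, ⟨?_, ?_, hpanti, ?_, ?_, ?_⟩, hpq, ?_⟩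
  · intro m; by_cases h : m ≤ 2*n+2
    · rw [hpp' _ h]; exact hp'open m
    · rw [hpV _ h]; exact hVo
  · intro m; by_cases h : m ≤ 2*n+2
    · rw [hpp' _ h]; exact hp'ne m
    · rw [hpV _ h]; exact hVne
  · -- strategy equations
    intro k hk
    rcases Nat.lt_or_ge k (n+1) with hkn | hkn
    · have hkn' : k ≤ n := by omega
      have hfun : (fun i : Fin (2*k+1) => p i.val) = (fun i => q i.val) := by
        funext i
        exact hpq i.val (by have := i.isLt; omega)
      rw [hfun, hpq (2*k+1) (by omega)]
      exact hq.2.2.2.1 k hkn'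

    · have hk1 : k = n+1 := by omega
      subst hk1
      have hfun : (fun i : Fin (2*(n+1)+1) => p i.val) = (fun i => p' i.val) := by
        funext i
        exact hpp' i.val (by have := i.isLt; omega)
      rw [hfun, hpV (2*(n+1)+1) (by omega)]
  · -- closure conditions
    intro k hk
    rcases Nat.lt_or_ge k n with hkn | hkn
    · rw [hpq (2*k+2) (by omega), hpq (2*k+1) (by omega)]
      exact hq.2.2.2.2.1 k hkn
    · have hk1 : k = n := by omega
      rw [hpp' (2*k+2) (by omega), hp'W (2*k+2) (by omega), hpq (2*k+1) (by omega), hk1]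
      exact hWcl.trans hsub
  · -- tail
    intro m hm
    have h1 : p (2*(n+1)+1) = V := hpV _ (by omega)
    rw [h1]
    exact hpV _ (by omega)
  · have h1 : p (2*n+3) = V := hpV _ (by omega)
    rw [h1]
    exact hVW.trans hWO

lemma exists_root {s : TopOddStrategy K} (hs : TopOddValid s) {O : Set K} (hO : IsOpen O)
    (hne : O.Nonempty) :
    ∃ p : ℕ → Set K, Good s 0 p ∧ p 1 ⊆ O := by
  set V := s 0 (fun _ : Fin (2*0+1) => O) with hVdef
  have hVspec := hs 0 (fun _ : Fin (2*0+1) => O)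
    ⟨fun _ => hO, fun _ => hne, fun _ _ _ => subset_rfl⟩
  obtain ⟨hVo, hVne, hVsub⟩ := hVspec
  set p : ℕ → Set K := fun i => if i = 0 then O else V with hpdef
  have hp0 : p 0 = O := if_pos rfl
  have hpV : ∀ i, i ≠ 0 → p i = V := fun i hi => if_neg hi
  refine ⟨p, ⟨?_, ?_, ?_, ?_, ?_, ?_⟩, ?_⟩
  · intro m; rcases Nat.eq_zero_or_pos m with h | h
    · subst h; rw [hp0]; exact hO
    · rw [hpV _ (by omega)]; exact hVo
  · intro m; rcases Nat.eq_zero_or_pos m with h | h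
    · subst h; rw [hp0]; exact hne
    · rw [hpV _ (by omega)]; exact hVne
  · intro m; rcases Nat.eq_zero_or_pos m with h | h
    · subst h; rw [hp0, hpV _ (by omega)]; exact hVsub
    · rw [hpV _ (by omega), hpV _ (by omega)]
  · intro k hk
    have hk0 : k = 0 := by omega
    subst hk0
    have hfun : (fun i : Fin (2*0+1) => p i.val) = (fun _ : Fin (2*0+1) => O) := by
      funext i
      have : (i : ℕ) = 0 := by have := i.isLt; omega
      rw [this, hp0]
    rw [hfun, hpV 1 (by omega)]
  · intro k hk; omega
  · intro m hm
    rw [hpV _ (by omega), hpV _ (by omega)]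
  · rw [hpV _ (by omega)]; exact hVsub

omit [CompactSpace K] [T2Space K] in
lemma zorn_disjoint_dense {C : Set (ℕ → Set K)} (f : (ℕ → Set K) → Set K)
    (hne : ∀ p ∈ C, (f p).Nonempty)
    (hdense : ∀ O : Set K, IsOpen O → O.Nonempty → ∃ p ∈ C, f p ⊆ O) :
    ∃ S : Set (ℕ → Set K), S ⊆ C ∧ (∀ p ∈ S, ∀ q ∈ S, p = q ∨ Disjoint (f p) (f q)) ∧
      Dense (⋃ p ∈ S, f p) := by
  set P : Set (Set (ℕ → Set K)) :=
    {S | S ⊆ C ∧ ∀ p ∈ S, ∀ q ∈ S, p = q ∨ Disjoint (f p) (f q)} with hP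
  have hch : ∀ c ⊆ P, IsChain (· ⊆ ·) c → ∃ ub ∈ P, ∀ s ∈ c, s ⊆ ub := by
    intro c hcP hchain
    refine ⟨⋃₀ c, ⟨?_, ?_⟩, fun s hs => subset_sUnion_of_mem hs⟩
    · exact sUnion_subset fun t ht => (hcP ht).1
    · rintro p hp q hq
      obtain ⟨a, hac, hpa⟩ := hp
      obtain ⟨b, hbc, hqb⟩ := hq
      rcases hchain.total hac hbc with hab | hba
      · exact (hcP hbc).2 p (hab hpa) q hqb
      · exact (hcP hac).2 p hpa q (hba hqb)
  obtain ⟨S, hSP, hSmax⟩ := zorn_subset P hch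
  · refine ⟨S, hSP.1, hSP.2, ?_⟩
    rw [dense_iff_inter_open]
    intro O hO hOne
    obtain ⟨c, hcC, hcsub⟩ := hdense O hO hOne
    by_cases hc : ∀ p ∈ S, p = c ∨ Disjoint (f p) (f c)
    · have hins : insert c S ∈ P := by
        constructor
        · exact insert_subset hcC hSP.1
        · rintro p hp q hq
          rcases hp with rfl | hp <;> rcases hq with rfl | hq
          · exact Or.inl rfl
          · rcases hc q hq with h | h
            · exact Or.inl h.symm
            · exact Or.inr h.symm
          · exact hc p hp
          · exact hSP.2 p hp q hq
      have hcS : c ∈ S := by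
        have := hSmax hins (subset_insert c S)
        exact this (mem_insert c S)
      obtain ⟨y, hy⟩ := hne c hcC
      exact ⟨y, hcsub hy, mem_biUnion hcS hy⟩
    · push_neg at hc
      obtain ⟨p, hpS, hpc, hpd⟩ := hc
      obtain ⟨y, hyp, hyc⟩ := Set.not_disjoint_iff.1 hpd
      exact ⟨y, hcsub hyc, mem_biUnion hpS hyp⟩

def Q (s : TopOddStrategy K) (n : ℕ) (S : Set (ℕ → Set K)) : Prop :=
  (∀ p ∈ S, Good s n p) ∧
  (∀ p ∈ S, ∀ q ∈ S, p = q ∨ Disjoint (p (2*n+1)) (q (2*n+1))) ∧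
  Dense (⋃ p ∈ S, p (2*n+1))

lemma exQ0 {s : TopOddStrategy K} (hs : TopOddValid s) : ∃ S, Q s 0 S := by
  obtain ⟨S, h1, h2, h3⟩ := zorn_disjoint_dense (C := {p : ℕ → Set K | Good s 0 p})
    (fun p => p (2*0+1)) (fun p hp => hp.2.1 _)
    (fun O hO hne => by
      obtain ⟨p, hp, hsub⟩ := exists_root hs hO hne
      exact ⟨p, hp, hsub⟩)
  exact ⟨S, fun p hp => h1 hp, h2, h3⟩

lemma exQsucc {s : TopOddStrategy K} (hs : TopOddValid s) (n : ℕ) {S : Set (ℕ → Set K)}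
    (hS : Q s n S) :
    ∃ T, Q s (n+1) T ∧ ∀ p ∈ T, ∃ q ∈ S, ∀ i, i ≤ 2*n+1 → p i = q i := by
  obtain ⟨T, h1, h2, h3⟩ := zorn_disjoint_dense
    (C := {p : ℕ → Set K | Good s (n+1) p ∧ ∃ q ∈ S, ∀ i, i ≤ 2*n+1 → p i = q i})
    (fun p => p (2*(n+1)+1)) (fun p hp => hp.1.2.1 _)
    (fun O hO hne => by
      obtain ⟨y, hyO, hyU⟩ := hS.2.2.inter_open_nonempty O hO hne
      obtain ⟨q, hqS, hyq⟩ := by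
        simpa only [mem_iUnion, exists_prop] using hyU
      have hO' : IsOpen (O ∩ q (2*n+1)) := hO.inter ((hS.1 q hqS).1 _)
      have hne' : (O ∩ q (2*n+1)).Nonempty := ⟨y, hyO, hyq⟩
      obtain ⟨p, hpG, hpExt, hpSub⟩ := exists_child hs (hS.1 q hqS) hO' hne'
        inter_subset_right
      refine ⟨p, ⟨hpG, q, hqS, hpExt⟩, ?_⟩
      have : (2*(n+1)+1) = 2*n+3 := by ring
      rw [this]
      exact hpSub.trans inter_subset_left)
  exact ⟨T, ⟨fun p hp => (h1 hp).1, h2, h3⟩, fun p hp => (h1 hp).2⟩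

variable (s : TopOddStrategy K)

noncomputable def Fam (hs : TopOddValid s) : (n : ℕ) → {S : Set (ℕ → Set K) // Q s n S}
  | 0 => ⟨(exQ0 hs).choose, (exQ0 hs).choose_spec⟩
  | n+1 => ⟨(exQsucc hs n (Fam hs n).2).choose, (exQsucc hs n (Fam hs n).2).choose_spec.1⟩

variable {s} (hs : TopOddValid s)

lemma Fam_ext (n : ℕ) :
    ∀ p ∈ (Fam s hs (n+1)).1, ∃ q ∈ (Fam s hs n).1, ∀ i, i ≤ 2*n+1 → p i = q i :=
  (exQsucc hs n (Fam s hs n).2).choose_spec.2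

/-- The dense `G_δ` set. -/
def Gd : Set K := ⋂ n, ⋃ p ∈ (Fam s hs n).1, p (2*n+1)

lemma Gd_dense : Dense (Gd hs) :=
  dense_iInter_of_isOpen
    (fun n => isOpen_biUnion fun p hp => ((Fam s hs n).2.1 p hp).1 _)
    (fun n => (Fam s hs n).2.2.2)

lemma Gd_isGδ : IsGδ (Gd hs) :=
  IsGδ.iInter_of_isOpen fun n => isOpen_biUnion fun p hp => ((Fam s hs n).2.1 p hp).1 _

lemma exists_unique_node (n : ℕ) {x : K} (hx : x ∈ Gd hs) :
    ∃! p, p ∈ (Fam s hs n).1 ∧ x ∈ p (2*n+1) := by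
  have hx' : x ∈ ⋃ p ∈ (Fam s hs n).1, p (2*n+1) := mem_iInter.1 hx n
  obtain ⟨p, hpF, hxp⟩ : ∃ p ∈ (Fam s hs n).1, x ∈ p (2*n+1) := by
    simpa only [mem_iUnion, exists_prop] using hx'
  refine ⟨p, ⟨hpF, hxp⟩, ?_⟩
  rintro q ⟨hqF, hxq⟩
  rcases (Fam s hs n).2.2.1 q hqF p hpF with h | h
  · exact h
  · exact absurd h (Set.not_disjoint_iff.2 ⟨x, hxq, hxp⟩)

noncomputable def node {x : K} (hx : x ∈ Gd hs) (n : ℕ) : ℕ → Set K :=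
  (exists_unique_node hs n hx).exists.choose

variable {x : K} (hx : x ∈ Gd hs)

lemma node_memF (n : ℕ) :
    node hs hx n ∈ (Fam s hs n).1 ∧ x ∈ node hs hx n (2*n+1) :=
  (exists_unique_node hs n hx).exists.choose_spec

lemma node_good (n : ℕ) : Good s n (node hs hx n) :=
  (Fam s hs n).2.1 _ (node_memF hs hx n).1

lemma node_eq {n : ℕ} {p : ℕ → Set K} (hp : p ∈ (Fam s hs n).1) (hxp : x ∈ p (2*n+1)) :
    p = node hs hx n :=
  (exists_unique_node hs n hx).unique ⟨hp, hxp⟩ ⟨(node_memF hs hx n).1, (node_memF hs hx n).2⟩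

lemma node_ext (n : ℕ) : ∀ i, i ≤ 2*n+1 → node hs hx (n+1) i = node hs hx n i := by
  obtain ⟨q, hqF, hqext⟩ := Fam_ext hs n _ (node_memF hs hx (n+1)).1
  have hxq : x ∈ q (2*n+1) := by
    have h1 : x ∈ node hs hx (n+1) (2*(n+1)+1) := (node_memF hs hx (n+1)).2
    have h2 : node hs hx (n+1) (2*(n+1)+1) ⊆ node hs hx (n+1) (2*n+1) :=
      seq_anti (node_good hs hx (n+1)).2.2.1 (by omega)
    rw [← hqext (2*n+1) le_rfl]
    exact h2 h1
  have hq : q = node hs hx n := node_eq hs hx hqF hxq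
  intro i hi
  rw [hqext i hi, hq]

lemma node_agree {n n' : ℕ} (h : n ≤ n') : ∀ i, i ≤ 2*n+1 → node hs hx n' i = node hs hx n i := by
  induction n', h using Nat.le_induction with
  | base => intro i _; rfl
  | succ m hm ih =>
    intro i hi
    rw [node_ext hs hx m i (by omega)]
    exact ih i hi

noncomputable def play : ℕ → Set K := fun m => node hs hx m m

lemma play_eq (k m : ℕ) (h : m ≤ 2*k+1) : play hs hx m = node hs hx k m := by
  show node hs hx m m = node hs hx k m
  rcases le_total m k with h' | h'
  · exact (node_agree hs hx h' m (by omega)).symm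
  · exact node_agree hs hx h' m h

lemma play_isPlay : TopPlay (play hs hx) := by
  refine ⟨fun m => (node_good hs hx m).1 m, fun m => (node_good hs hx m).2.1 m, fun m => ?_⟩
  have h1 : play hs hx (m+1) = node hs hx m (m+1) := by
    show node hs hx (m+1) (m+1) = node hs hx m (m+1)
    exact node_agree hs hx (Nat.le_succ m) (m+1) (by omega)
  rw [h1]
  exact (node_good hs hx m).2.2.1 m

lemma play_follows : TopOddFollows (play hs hx) s := by
  intro k
  have hfun : (fun i : Fin (2*k+1) => play hs hx i.val) = (fun i => node hs hx k i.val) := by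
    funext i
    exact play_eq hs hx k i.val (by have := i.isLt; omega)
  rw [play_eq hs hx k (2*k+1) le_rfl, (node_good hs hx k).2.2.2.1 k le_rfl, hfun]

lemma play_mem (m : ℕ) : x ∈ play hs hx m := by
  have h1 : x ∈ node hs hx m (2*m+1) := (node_memF hs hx m).2
  have h2 : node hs hx m (2*m+1) ⊆ node hs hx m m :=
    seq_anti (node_good hs hx m).2.2.1 (by omega)
  exact h2 h1

lemma play_anti {a b : ℕ} (h : a ≤ b) : play hs hx b ⊆ play hs hx a :=
  seq_anti (play_isPlay hs hx).2.2 h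

variable (hw : ∀ U : ℕ → Set K, TopPlay U → TopOddFollows U s → ∃ y : K, (⋂ n, U n) = {y})

include hw

lemma play_iInter : (⋂ m, play hs hx m) = {x} := by
  obtain ⟨y, hy⟩ := hw _ (play_isPlay hs hx) (play_follows hs hx)
  have hxmem : x ∈ ⋂ m, play hs hx m := mem_iInter.2 (play_mem hs hx)
  rw [hy] at hxmem ⊢
  rw [mem_singleton_iff] at hxmem
  rw [hxmem]

lemma nbhd {O : Set K} (hO : IsOpen O) (hxO : x ∈ O) :
    ∃ n, node hs hx n (2*n+1) ⊆ O := by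
  have key : ∃ k, closure (play hs hx (2*k+2)) ⊆ O := by
    by_contra hcon
    push_neg at hcon
    set C : ℕ → Set K := fun k => closure (play hs hx (2*k+2)) ∩ Oᶜ with hC
    have hne : ∀ k, (C k).Nonempty := by
      intro k
      rcases Set.not_subset.1 (hcon k) with ⟨z, hz1, hz2⟩
      exact ⟨z, hz1, hz2⟩
    have hclosed : ∀ k, IsClosed (C k) := fun k =>
      isClosed_closure.inter hO.isClosed_compl
    have hcomp : ∀ k, IsCompact (C k) := fun k => (hclosed k).isCompact
    have hanti : ∀ j k, j ≤ k → C k ⊆ C j := fun j k h =>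
      inter_subset_inter_left _ (closure_mono (play_anti hs hx (by omega)))
    have hdir : Directed (· ⊇ ·) C := fun j k =>
      ⟨max j k, hanti _ _ (le_max_left j k), hanti _ _ (le_max_right j k)⟩
    obtain ⟨z, hz⟩ := IsCompact.nonempty_iInter_of_directed_nonempty_isCompact_isClosed
      C hdir hne hcomp hclosed
    have hz1 : ∀ k, z ∈ closure (play hs hx (2*k+2)) := fun k => (mem_iInter.1 hz k).1
    have hz2 : z ∉ O := (mem_iInter.1 hz 0).2
    have hzplay : ∀ m, z ∈ play hs hx m := by
      intro m
      have h2 : closure (play hs hx (2*m+2)) ⊆ play hs hx (2*m+1) := by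
        rw [play_eq hs hx (m+1) (2*m+2) (by omega), play_eq hs hx (m+1) (2*m+1) (by omega)]
        exact (node_good hs hx (m+1)).2.2.2.2.1 m (by omega)
      exact play_anti hs hx (by omega) (h2 (hz1 m))
    have hzin : z ∈ ⋂ m, play hs hx m := mem_iInter.2 hzplay
    rw [play_iInter hs hx hw, mem_singleton_iff] at hzin
    exact hz2 (hzin ▸ hxO)
  obtain ⟨k, hk⟩ := key
  refine ⟨k+1, ?_⟩
  have e : 2*(k+1)+1 = 2*k+3 := by ring
  rw [e, ← play_eq hs hx (k+1) (2*k+3) (by omega)]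
  exact (play_anti hs hx (by omega : 2*k+2 ≤ 2*k+3)).trans (subset_closure.trans hk)

omit hw in
lemma nd_mem (a : ↥(Gd hs)) (n : ℕ) : (a : K) ∈ node hs a.2 n (2*n+1) :=
  (node_memF hs a.2 n).2

omit hw in
lemma nd_unique {a b : ↥(Gd hs)} {n : ℕ} (h : (b : K) ∈ node hs a.2 n (2*n+1)) :
    node hs a.2 n = node hs b.2 n :=
  node_eq hs b.2 (node_memF hs a.2 n).1 h

omit hw in
lemma E_succ {a b : ↥(Gd hs)} {n : ℕ} (h : node hs a.2 (n+1) = node hs b.2 (n+1)) :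
    node hs a.2 n = node hs b.2 n := by
  have hb : (b : K) ∈ node hs a.2 n (2*n+1) := by
    have h1 : (b : K) ∈ node hs b.2 (n+1) (2*(n+1)+1) := nd_mem hs b (n+1)
    rw [← h] at h1
    have h2 : node hs a.2 (n+1) (2*(n+1)+1) ⊆ node hs a.2 (n+1) (2*n+1) :=
      seq_anti (node_good hs a.2 (n+1)).2.2.1 (by omega)
    have h3 : node hs a.2 (n+1) (2*n+1) = node hs a.2 n (2*n+1) :=
      node_ext hs a.2 n _ le_rfl
    rw [← h3]
    exact h2 h1
  exact nd_unique hs hb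

omit hw in
lemma E_le {a b : ↥(Gd hs)} {m n : ℕ} (hmn : m ≤ n)
    (h : node hs a.2 n = node hs b.2 n) :
    node hs a.2 m = node hs b.2 m := by
  obtain ⟨d, rfl⟩ := Nat.exists_eq_add_of_le hmn
  have key : ∀ d', node hs a.2 (m+d') = node hs b.2 (m+d') →
      node hs a.2 m = node hs b.2 m := by
    intro d'
    induction d' with
    | zero => exact fun h => h
    | succ d' ih => exact fun h => ih (E_succ hs h)
  exact key d h

lemma E_all {a b : ↥(Gd hs)} (h : ∀ n, node hs a.2 n = node hs b.2 n) : a = b := by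
  have hb : ∀ m, (b : K) ∈ play hs a.2 m := by
    intro m
    have h1 : (b : K) ∈ node hs b.2 m (2*m+1) := nd_mem hs b m
    rw [← h m] at h1
    have h2 : node hs a.2 m (2*m+1) ⊆ node hs a.2 m m :=
      seq_anti (node_good hs a.2 m).2.2.1 (by omega)
    exact h2 h1
  have hbi : (b : K) ∈ ⋂ m, play hs a.2 m := mem_iInter.2 hb
  rw [play_iInter hs a.2 hw, mem_singleton_iff] at hbi
  exact (Subtype.ext hbi).symm

omit hw

open scoped Classical

/-- The ultrametric on the dense `G_δ` set. -/
noncomputable def dG (a b : ↥(Gd hs)) : ℝ :=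
  if h : ∃ n, node hs a.2 n ≠ node hs b.2 n
  then (1/2 : ℝ)^(Nat.find h) else 0

lemma dG_self (a : ↥(Gd hs)) : dG hs a a = 0 := by
  unfold dG
  rw [dif_neg]
  push_neg
  exact fun n => rfl

lemma dG_nonneg (a b : ↥(Gd hs)) : 0 ≤ dG hs a b := by
  unfold dG
  split
  · positivity
  · exact le_refl 0

lemma dG_comm (a b : ↥(Gd hs)) : dG hs a b = dG hs b a := by
  unfold dG
  by_cases h : ∃ n, node hs a.2 n ≠ node hs b.2 n
  · have h' : ∃ n, node hs b.2 n ≠ node hs a.2 n := h.imp fun n hn => hn.symm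
    rw [dif_pos h, dif_pos h']
    have : Nat.find h = Nat.find h' :=
      le_antisymm (Nat.find_le (Nat.find_spec h').symm) (Nat.find_le (Nat.find_spec h).symm)
    rw [this]
  · have h' : ¬ ∃ n, node hs b.2 n ≠ node hs a.2 n :=
      fun hc => h (hc.imp fun n hn => hn.symm)
    rw [dif_neg h, dif_neg h']

include hw in
lemma dG_eq_zero {a b : ↥(Gd hs)} (h : dG hs a b = 0) : a = b := by
  unfold dG at h
  by_cases hex : ∃ n, node hs a.2 n ≠ node hs b.2 n
  · rw [dif_pos hex] at h
    exact absurd h (by positivity)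
  · push_neg at hex
    exact E_all hs hw hex

lemma dG_triangle (a b c : ↥(Gd hs)) : dG hs a c ≤ dG hs a b + dG hs b c := by
  by_cases hac : ∃ n, node hs a.2 n ≠ node hs c.2 n
  · have hmain : dG hs a c ≤ max (dG hs a b) (dG hs b c) := by
      have hspec : node hs a.2 (Nat.find hac)
          ≠ node hs c.2 (Nat.find hac) := Nat.find_spec hac
      have hor : node hs a.2 (Nat.find hac)
            ≠ node hs b.2 (Nat.find hac) ∨
          node hs b.2 (Nat.find hac)
            ≠ node hs c.2 (Nat.find hac) := by
        by_contra hcon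
        push_neg at hcon
        exact hspec (hcon.1.trans hcon.2)
      rcases hor with h1 | h1
      · have hab : ∃ n, node hs a.2 n ≠ node hs b.2 n := ⟨_, h1⟩
        have hle : Nat.find hab
            ≤ Nat.find hac := Nat.find_le h1
        refine le_max_of_le_left ?_
        unfold dG
        rw [dif_pos hac, dif_pos hab]
        exact pow_le_pow_of_le_one (by norm_num) (by norm_num) hle
      · have hbc : ∃ n, node hs b.2 n ≠ node hs c.2 n := ⟨_, h1⟩
        have hle : Nat.find hbc
            ≤ Nat.find hac := Nat.find_le h1
        refine le_max_of_le_right ?_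
        unfold dG
        rw [dif_pos hac, dif_pos hbc]
        exact pow_le_pow_of_le_one (by norm_num) (by norm_num) hle
    refine hmain.trans (max_le ?_ ?_)
    · exact le_add_of_nonneg_right (dG_nonneg hs _ _)
    · exact le_add_of_nonneg_left (dG_nonneg hs _ _)
  · have h0 : dG hs a c = 0 := by
      unfold dG
      exact dif_neg hac
    rw [h0]
    exact add_nonneg (dG_nonneg hs _ _) (dG_nonneg hs _ _)

include hw in
lemma dG_topology (t : Set ↥(Gd hs)) :
    IsOpen t ↔ ∀ a ∈ t, ∃ ε > 0, ∀ b, dG hs a b < ε → b ∈ t := by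
  constructor
  · intro ht a ha
    obtain ⟨O, hO, hpre⟩ := isOpen_induced_iff.mp ht
    have haO : (a : K) ∈ O := by rw [← hpre] at ha; exact ha
    obtain ⟨n, hn⟩ := nbhd hs a.2 hw hO haO
    refine ⟨(1/2 : ℝ)^n, by positivity, ?_⟩
    intro b hb
    have hEn : node hs a.2 n = node hs b.2 n := by
      by_cases hab : ∃ m, node hs a.2 m ≠ node hs b.2 m
      · have hd : dG hs a b = (1/2:ℝ)^(Nat.find hab) := by unfold dG; rw [dif_pos hab]
        rw [hd] at hb
        have hlt : n < Nat.find hab := by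
          by_contra hle
          push_neg at hle
          have := pow_le_pow_of_le_one (by norm_num : (0:ℝ) ≤ 1/2) (by norm_num) hle
          linarith
        exact not_not.mp (Nat.find_min hab hlt)
      · push_neg at hab
        exact hab n
    have hbO : (b : K) ∈ O := by
      have h1 : (b : K) ∈ node hs b.2 n (2*n+1) := nd_mem hs b n
      rw [← hEn] at h1
      exact hn h1
    rw [← hpre]
    exact hbO
  · intro h
    apply isOpen_iff_forall_mem_open.mpr
    intro a ha
    obtain ⟨ε, hε, hb⟩ := h a ha
    obtain ⟨n, hn⟩ := exists_pow_lt_of_lt_one hε (by norm_num : (1/2:ℝ) < 1)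
    refine ⟨Subtype.val ⁻¹' (node hs a.2 n (2*n+1)), ?_, ?_, ?_⟩
    · intro b hbmem
      have hE : node hs a.2 n = node hs b.2 n := nd_unique hs hbmem
      have hdle : dG hs a b ≤ (1/2:ℝ)^n := by
        by_cases hab : ∃ m, node hs a.2 m ≠ node hs b.2 m
        · have hd : dG hs a b = (1/2:ℝ)^(Nat.find hab) := by unfold dG; rw [dif_pos hab]
          rw [hd]
          have hlt : n < Nat.find hab := by
            rcases Nat.lt_or_ge n (Nat.find hab) with h' | h'
            · exact h'
            · exact absurd (E_le hs h' hE) (Nat.find_spec hab)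
          exact pow_le_pow_of_le_one (by norm_num) (by norm_num) hlt.le
        · have h0 : dG hs a b = 0 := by unfold dG; exact dif_neg hab
          rw [h0]
          positivity
      exact hb b (lt_of_le_of_lt hdle hn)
    · exact continuous_subtype_val.isOpen_preimage _ ((node_good hs a.2 n).1 _)
    · exact nd_mem hs a n

include hw in
lemma Gd_metrizable : TopologicalSpace.MetrizableSpace ↥(Gd hs) := by
  letI : MetricSpace ↥(Gd hs) := MetricSpace.ofDistTopology (dG hs) (dG_self hs) (dG_comm hs)
    (dG_triangle hs) (dG_topology hs hw) (fun a b h => dG_eq_zero hs hw h)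
  exact inferInstance

theorem backward {G : Set K} (hGd : Dense G) (hGδ : IsGδ G)
    (hGm : TopologicalSpace.MetrizableSpace ↥G) :
    ∃ st : TopOddStrategy K, TopOddValid st ∧
      ∀ U : ℕ → Set K, TopPlay U → TopOddFollows U st → ∃ x : K, (⋂ n, U n) = {x} := by
  classical
  obtain ⟨W, hWopen, hGW⟩ := hGδ.eq_iInter_nat
  letI : MetricSpace ↥G := TopologicalSpace.metrizableSpaceMetric ↥G
  have key : ∀ (U : Set K) (k : ℕ), IsOpen U → U.Nonempty →
      ∃ V : Set K, IsOpen V ∧ V.Nonempty ∧ closure V ⊆ U ∧ closure V ⊆ W k ∧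
        ∀ a b : ↥G, (a:K) ∈ V → (b:K) ∈ V → dist a b < 2*(1/2:ℝ)^k := by
    intro U k hU hne
    obtain ⟨x, hxU, hxG⟩ := hGd.inter_open_nonempty U hU hne
    set xg : ↥G := ⟨x, hxG⟩ with hxg
    have hball : IsOpen (Metric.ball xg ((1/2:ℝ)^k)) := Metric.isOpen_ball
    obtain ⟨O, hOopen, hOpre⟩ := isOpen_induced_iff.mp hball
    have hxO : x ∈ O := by
      have h1 : xg ∈ Metric.ball xg ((1/2:ℝ)^k) := Metric.mem_ball_self (by positivity)
      rw [← hOpre] at h1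
      exact h1
    have hxW : x ∈ W k := by
      have h1 : x ∈ ⋂ n, W n := hGW ▸ hxG
      exact mem_iInter.1 h1 k
    have hO' : IsOpen (O ∩ (U ∩ W k)) := hOopen.inter (hU.inter (hWopen k))
    have hxO' : x ∈ O ∩ (U ∩ W k) := ⟨hxO, hxU, hxW⟩
    obtain ⟨V, hVo, hxV, hVcl⟩ := shrink hO' hxO'
    refine ⟨V, hVo, ⟨x, hxV⟩, hVcl.trans (inter_subset_right.trans inter_subset_left),
      hVcl.trans (inter_subset_right.trans inter_subset_right), ?_⟩
    intro a b haV hbV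
    have hVO : V ⊆ O := (subset_closure.trans hVcl).trans inter_subset_left
    have haB : a ∈ Metric.ball xg ((1/2:ℝ)^k) := by rw [← hOpre]; exact hVO haV
    have hbB : b ∈ Metric.ball xg ((1/2:ℝ)^k) := by rw [← hOpre]; exact hVO hbV
    rw [Metric.mem_ball] at haB hbB
    calc dist a b ≤ dist a xg + dist xg b := dist_triangle _ _ _
      _ < (1/2:ℝ)^k + (1/2:ℝ)^k := by
          rw [dist_comm xg b]
          exact add_lt_add haB hbB
      _ = 2*(1/2:ℝ)^k := by ring
  refine ⟨fun k v => if h : IsOpen (v (Fin.last (2*k))) ∧ (v (Fin.last (2*k))).Nonempty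
    then (key _ k h.1 h.2).choose else ∅, ?_, ?_⟩
  · intro k v hv
    have h : IsOpen (v (Fin.last (2*k))) ∧ (v (Fin.last (2*k))).Nonempty := ⟨hv.1 _, hv.2.1 _⟩
    simp only [dif_pos h]
    obtain ⟨h1, h2, h3, h4, h5⟩ := (key _ k h.1 h.2).choose_spec
    exact ⟨h1, h2, subset_closure.trans h3⟩
  · intro U hU hfol
    have hUanti : ∀ {a b : ℕ}, a ≤ b → U b ⊆ U a := fun hab => seq_anti hU.2.2 hab
    have hstep : ∀ k, closure (U (2*k+1)) ⊆ U (2*k) ∧ closure (U (2*k+1)) ⊆ W k ∧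
        ∀ a b : ↥G, (a:K) ∈ U (2*k+1) → (b:K) ∈ U (2*k+1) → dist a b < 2*(1/2:ℝ)^k := by
      intro k
      have h : IsOpen (U (2*k)) ∧ (U (2*k)).Nonempty := ⟨hU.1 _, hU.2.1 _⟩
      have heq : U (2*k+1) = (key (U (2*k)) k h.1 h.2).choose := by
        rw [hfol k]
        exact dif_pos h
      rw [heq]
      obtain ⟨h1, h2, h3, h4, h5⟩ := (key (U (2*k)) k h.1 h.2).choose_spec
      exact ⟨h3, h4, h5⟩
    set C : ℕ → Set K := fun k => closure (U (2*k+1)) with hC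
    have hanti : ∀ j k, j ≤ k → C k ⊆ C j := fun j k h => closure_mono (hUanti (by omega))
    have hdir : Directed (· ⊇ ·) C := fun j k =>
      ⟨max j k, hanti _ _ (le_max_left _ _), hanti _ _ (le_max_right _ _)⟩
    obtain ⟨y, hy⟩ := IsCompact.nonempty_iInter_of_directed_nonempty_isCompact_isClosed C hdir
      (fun k => (hU.2.1 _).closure) (fun k => isClosed_closure.isCompact)
      (fun k => isClosed_closure)
    have hyC : ∀ k, y ∈ closure (U (2*k+1)) := fun k => mem_iInter.1 hy k
    have hyG : y ∈ G := by
      rw [hGW]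
      exact mem_iInter.2 fun k => (hstep k).2.1 (hyC k)
    have hyU : ∀ m, y ∈ U m := by
      intro m
      exact hUanti (by omega) ((hstep m).1 (hyC m))
    refine ⟨y, ?_⟩
    rw [Set.eq_singleton_iff_unique_mem]
    refine ⟨mem_iInter.2 hyU, ?_⟩
    intro z hz
    have hzU : ∀ m, z ∈ U m := mem_iInter.1 hz
    have hzG : z ∈ G := by
      rw [hGW]
      exact mem_iInter.2 fun k => (hstep k).2.1 (subset_closure (hzU (2*k+1)))
    have hdist : ∀ k, dist (⟨z, hzG⟩ : ↥G) (⟨y, hyG⟩ : ↥G) < 2*(1/2:ℝ)^k := fun k =>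
      (hstep k).2.2 _ _ (hzU (2*k+1)) (hyU (2*k+1))
    have h0 : dist (⟨z, hzG⟩ : ↥G) (⟨y, hyG⟩ : ↥G) = 0 := by
      by_contra hne0
      have hpos : 0 < dist (⟨z, hzG⟩ : ↥G) (⟨y, hyG⟩ : ↥G) :=
        lt_of_le_of_ne dist_nonneg (Ne.symm hne0)
      obtain ⟨k, hk⟩ := exists_pow_lt_of_lt_one
        (by linarith : (0:ℝ) < dist (⟨z, hzG⟩ : ↥G) (⟨y, hyG⟩ : ↥G) / 2)
        (by norm_num : (1/2:ℝ) < 1)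
      have h1 := hdist k
      have h2 : 2*(1/2:ℝ)^k < dist (⟨z, hzG⟩ : ↥G) (⟨y, hyG⟩ : ↥G) := by linarith
      linarith
    exact congrArg Subtype.val (eq_of_dist_eq_zero h0)

end BM9

/-- For a nonempty compact Hausdorff space `K`, Odd has a
winning strategy in the game `BM(K, ⋆)` iff `K` contains a dense `G_δ`
metrizable subspace. -/
theorem odd_wins_star_iff_dense_Gdelta_metrizable {K : Type*} [TopologicalSpace K]
    [CompactSpace K] [T2Space K] [Nonempty K] :
    TopOddWinsStar K ↔
      ∃ G : Set K, Dense G ∧ IsGδ G ∧ TopologicalSpace.MetrizableSpace ↥G := by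
  constructor
  · rintro ⟨s, hs, hw⟩
    exact ⟨BM9.Gd hs, BM9.Gd_dense hs, BM9.Gd_isGδ hs, BM9.Gd_metrizable hs hw⟩
  · rintro ⟨G, hGd, hGδ, hGm⟩
    exact BM9.backward hGd hGδ hGm
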